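/- Define γ(θ) = C − A·exp(−(θ−μ)ᵀκ⁻¹(θ−μ)/2) and γ_AMP(θ) = max_{‖Δ‖≤ε} γ(θ+Δ), where A > 0, ε > 0, and κ is symmetric positive definite with smallest eigenvalue σ². Then for every θ, γ_AMP(θ) ≥ C − A·exp(−ε²/(2σ²)), with equality at θ = μ; i.e. min_θ γ_AMP(θ) = C − A·exp(−ε²/(2σ²)). -/

import Mathlib

open Matrix

private lemma ip_dp {K : ℕ} (u v : EuclideanSpace ℝ (Fin K)) :
    (inner ℝ u v : ℝ) = u ⬝ᵥ v := by
  simp [PiLp.inner_apply, dotProduct, mul_comm]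

private lemma dp_symm {K : ℕ} {M : Matrix (Fin K) (Fin K) ℝ} (hM : M.IsHermitian)
    (u v : Fin K → ℝ) : u ⬝ᵥ M.mulVec v = M.mulVec u ⬝ᵥ v := by
  rw [dotProduct_mulVec, ← Matrix.transpose_transpose M, vecMul_transpose, transpose_transpose,
    show Mᵀ = M from hM]

private lemma qf_lower {K : ℕ} {κ : Matrix (Fin K) (Fin K) ℝ} (hκ : κ.PosDef)
    {σ2 : ℝ}
    (hmin : ∀ (lam : ℝ) (v : EuclideanSpace ℝ (Fin K)), v ≠ 0 →
      κ.mulVec v = lam • (v : Fin K → ℝ) → σ2 ≤ lam)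
    (x : EuclideanSpace ℝ (Fin K)) :
    σ2 * ‖x‖ ^ 2 ≤ x ⬝ᵥ κ.mulVec x := by
  have hH := hκ.1
  set b := hH.eigenvectorBasis with hb
  have hev : ∀ i, σ2 ≤ hH.eigenvalues i := fun i =>
    hmin _ (b i) (b.orthonormal.ne_zero i) (hH.mulVec_eigenvectorBasis i)
  have hy : ∀ i : Fin K, (inner ℝ (b i) (WithLp.toLp 2 (κ.mulVec x)) : ℝ)
      = hH.eigenvalues i * inner ℝ x (b i) := by
    intro i
    rw [ip_dp, WithLp.ofLp_toLp, dp_symm hH]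
    erw [hH.mulVec_eigenvectorBasis i]
    rw [smul_dotProduct, ip_dp, dotProduct_comm]
    rfl
  have h1 : x ⬝ᵥ κ.mulVec x
      = ∑ i, hH.eigenvalues i * (inner ℝ x (b i) : ℝ) ^ 2 := by
    rw [← ip_dp x (WithLp.toLp 2 (κ.mulVec x)),
      ← b.sum_inner_mul_inner x (WithLp.toLp 2 (κ.mulVec x))]
    refine Finset.sum_congr rfl fun i _ => ?_
    rw [hy i]; ring
  have h2 : ‖x‖ ^ 2 = ∑ i, (inner ℝ x (b i) : ℝ) ^ 2 := by
    rw [← real_inner_self_eq_norm_sq, ← b.sum_inner_mul_inner x x]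
    refine Finset.sum_congr rfl fun i _ => ?_
    rw [real_inner_comm (b i) x]; ring
  rw [h1, h2, Finset.mul_sum]
  exact Finset.sum_le_sum fun i _ =>
    mul_le_mul_of_nonneg_right (hev i) (sq_nonneg _)

private lemma qf_inv_upper {K : ℕ} {κ : Matrix (Fin K) (Fin K) ℝ} (hκ : κ.PosDef)
    {σ2 : ℝ} (hσ2 : 0 < σ2)
    (hmin : ∀ (lam : ℝ) (v : EuclideanSpace ℝ (Fin K)), v ≠ 0 →
      κ.mulVec v = lam • (v : Fin K → ℝ) → σ2 ≤ lam)
    (x : EuclideanSpace ℝ (Fin K)) :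
    x ⬝ᵥ κ⁻¹.mulVec x ≤ ‖x‖ ^ 2 / σ2 := by
  set y : EuclideanSpace ℝ (Fin K) := WithLp.toLp 2 (κ⁻¹.mulVec x) with hy
  have hky : κ.mulVec (y : Fin K → ℝ) = x := by
    rw [hy, WithLp.ofLp_toLp, mulVec_mulVec,
      Matrix.mul_nonsing_inv _ (isUnit_iff_ne_zero.mpr hκ.det_pos.ne'), one_mulVec]
  have hlow : σ2 * ‖y‖ ^ 2 ≤ (y : Fin K → ℝ) ⬝ᵥ (x : Fin K → ℝ) := by
    have := qf_lower hκ hmin y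
    rwa [hky] at this
  have ht : x ⬝ᵥ κ⁻¹.mulVec x = (y : Fin K → ℝ) ⬝ᵥ (x : Fin K → ℝ) := by
    rw [hy, WithLp.ofLp_toLp, dotProduct_comm]
  have hcs : (y : Fin K → ℝ) ⬝ᵥ (x : Fin K → ℝ) ≤ ‖y‖ * ‖x‖ := by
    rw [← ip_dp]; exact real_inner_le_norm y x
  rw [ht, le_div_iff₀ hσ2]
  nlinarith [mul_le_mul_of_nonneg_left hcs hσ2.le, mul_le_mul_of_nonneg_left hlow hσ2.le,
    sq_nonneg (‖x‖ - σ2 * ‖y‖)]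

private lemma expand_qf {K : ℕ} {M : Matrix (Fin K) (Fin K) ℝ} (hM : M.IsHermitian)
    (z w : Fin K → ℝ) (s : ℝ) :
    (z + s • w) ⬝ᵥ M.mulVec (z + s • w)
      = z ⬝ᵥ M.mulVec z + 2 * s * (z ⬝ᵥ M.mulVec w) + s ^ 2 * (w ⬝ᵥ M.mulVec w) := by
  have hsy : w ⬝ᵥ M.mulVec z = z ⬝ᵥ M.mulVec w := by
    rw [dp_symm hM, dotProduct_comm]
  simp only [mulVec_add, mulVec_smul, dotProduct_add, add_dotProduct, dotProduct_smul,
    smul_dotProduct, smul_eq_mul, hsy]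
  ring

theorem amp_loss_min_inverted_gaussian (K : ℕ) (κ : Matrix (Fin K) (Fin K) ℝ) (hκ : κ.PosDef)
    (σ2 : ℝ) (hσ2 : 0 < σ2) (qv : EuclideanSpace ℝ (Fin K)) (hqv : ‖qv‖ = 1)
    (heig : κ.mulVec qv = σ2 • (qv : Fin K → ℝ))
    (hmin : ∀ (lam : ℝ) (v : EuclideanSpace ℝ (Fin K)), v ≠ 0 →
      κ.mulVec v = lam • (v : Fin K → ℝ) → σ2 ≤ lam)
    (μ : EuclideanSpace ℝ (Fin K)) (A C ε : ℝ) (hA : 0 < A) (hε : 0 < ε)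
    (γ γAMP : EuclideanSpace ℝ (Fin K) → ℝ)
    (hγ : ∀ θ, γ θ = C - A * Real.exp (-((θ - μ) ⬝ᵥ κ⁻¹.mulVec (θ - μ)) / 2))
    (hγAMP : ∀ θ, IsGreatest ((fun Δ : EuclideanSpace ℝ (Fin K) => γ (θ + Δ)) ''
      {Δ : EuclideanSpace ℝ (Fin K) | ‖Δ‖ ≤ ε}) (γAMP θ)) :
    (∀ θ, C - A * Real.exp (-ε ^ 2 / (2 * σ2)) ≤ γAMP θ) ∧
      γAMP μ = C - A * Real.exp (-ε ^ 2 / (2 * σ2)) := by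
  have hdet : IsUnit κ.det := isUnit_iff_ne_zero.mpr hκ.det_pos.ne'
  have hHinv : κ⁻¹.IsHermitian := (hκ.inv).1
  have hinvqv : κ⁻¹.mulVec qv = σ2⁻¹ • (qv : Fin K → ℝ) := by
    have h1 : κ⁻¹.mulVec (κ.mulVec qv) = qv := by
      rw [mulVec_mulVec, Matrix.nonsing_inv_mul _ hdet, one_mulVec]
    rw [heig, mulVec_smul] at h1
    have h2 : σ2⁻¹ • (σ2 • κ⁻¹.mulVec (qv : Fin K → ℝ)) = σ2⁻¹ • (qv : Fin K → ℝ) := by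
      rw [h1]
    rwa [smul_smul, inv_mul_cancel₀ hσ2.ne', one_smul] at h2
  have hqvqv : (qv : Fin K → ℝ) ⬝ᵥ (qv : Fin K → ℝ) = 1 := by
    have h := real_inner_self_eq_norm_sq qv
    rw [hqv, ip_dp] at h
    simpa using h
  have hqq : (qv : Fin K → ℝ) ⬝ᵥ κ⁻¹.mulVec qv = 1 / σ2 := by
    rw [hinvqv, dotProduct_smul, hqvqv]
    simp [one_div, smul_eq_mul]
  have hq0 : ∀ z : Fin K → ℝ, 0 ≤ z ⬝ᵥ κ⁻¹.mulVec z := by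
    intro z
    have := (hκ.inv).posSemidef.re_dotProduct_nonneg z
    simpa using this
  have hlb : ∀ θ, C - A * Real.exp (-ε ^ 2 / (2 * σ2)) ≤ γAMP θ := by
    intro θ
    set x : EuclideanSpace ℝ (Fin K) := θ - μ with hx
    set c : ℝ := (x : Fin K → ℝ) ⬝ᵥ κ⁻¹.mulVec qv with hc
    set s : ℝ := if 0 ≤ c then ε else -ε with hs
    have hsabs : |s| = ε := by
      rw [hs]; split
      · exact abs_of_pos hε
      · rw [abs_neg]; exact abs_of_pos hε
    set Δ : EuclideanSpace ℝ (Fin K) := s • qv with hΔdef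
    have hΔnorm : ‖Δ‖ ≤ ε := by
      rw [hΔdef, norm_smul, hqv, mul_one, Real.norm_eq_abs, hsabs]
    have hcross : 0 ≤ s * c := by
      rw [hs]; split
      · exact mul_nonneg hε.le (by assumption)
      · have hcneg : c < 0 := lt_of_not_ge (by assumption)
        nlinarith
    have hsub : (θ + Δ) - μ = x + Δ := by rw [hx]; abel
    have hval : ((θ + Δ) - μ) ⬝ᵥ κ⁻¹.mulVec ((θ + Δ) - μ)
        = (x : Fin K → ℝ) ⬝ᵥ κ⁻¹.mulVec x + 2 * s * c + s ^ 2 * (1 / σ2) := by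
      rw [show ((θ + Δ - μ : EuclideanSpace ℝ (Fin K)) : Fin K → ℝ) = x.ofLp + s • qv.ofLp by
          rw [hx, hΔdef]; ext i; simp; ring,
        show θ.ofLp + Δ.ofLp - μ.ofLp = x.ofLp + s • qv.ofLp by
          rw [hx, hΔdef]; ext i; simp; ring]
      have := expand_qf hHinv (x : Fin K → ℝ) (qv : Fin K → ℝ) s
      rw [← hc, hqq] at this
      exact this
    have hbig : ε ^ 2 / σ2 ≤ ((θ + Δ) - μ) ⬝ᵥ κ⁻¹.mulVec ((θ + Δ) - μ) := by
      rw [hval]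
      have h1 := hq0 (x : Fin K → ℝ)
      have hs2 : s ^ 2 = ε ^ 2 := by rw [← sq_abs, hsabs]
      have hrw : ε ^ 2 / σ2 = ε ^ 2 * (1 / σ2) := by ring
      rw [hs2, hrw]
      linarith
    have hmem : γ (θ + Δ) ≤ γAMP θ := (hγAMP θ).2 ⟨Δ, hΔnorm, rfl⟩
    have hγval : C - A * Real.exp (-ε ^ 2 / (2 * σ2)) ≤ γ (θ + Δ) := by
      rw [hγ, WithLp.ofLp_add]
      have hle : -(((θ + Δ) - μ) ⬝ᵥ κ⁻¹.mulVec ((θ + Δ) - μ)) / 2 ≤ -ε ^ 2 / (2 * σ2) := by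
        have hr : -ε ^ 2 / (2 * σ2) = -(ε ^ 2 / σ2) / 2 := by field_simp
        rw [hr]; linarith
      have := Real.exp_le_exp.mpr hle
      nlinarith
    linarith
  refine ⟨hlb, le_antisymm ?_ (hlb μ)⟩
  obtain ⟨Δ, hΔ, hval⟩ := (hγAMP μ).1
  rw [← hval]
  show γ (μ + Δ) ≤ _
  rw [hγ, WithLp.ofLp_add]
  have hsub : (μ + Δ) - μ = Δ := by abel
  have hup : ((μ + Δ) - μ) ⬝ᵥ κ⁻¹.mulVec ((μ + Δ) - μ) ≤ ε ^ 2 / σ2 := by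
    rw [hsub, add_sub_cancel_left]
    have h1 := qf_inv_upper hκ hσ2 hmin Δ
    have h2 : ‖Δ‖ ^ 2 ≤ ε ^ 2 := by
      have := pow_le_pow_left₀ (norm_nonneg Δ) hΔ 2
      simpa using this
    calc Δ ⬝ᵥ κ⁻¹.mulVec Δ ≤ ‖Δ‖ ^ 2 / σ2 := h1
      _ ≤ ε ^ 2 / σ2 := by gcongr
  have hle : -ε ^ 2 / (2 * σ2) ≤ -(((μ + Δ) - μ) ⬝ᵥ κ⁻¹.mulVec ((μ + Δ) - μ)) / 2 := by
    have hr : -ε ^ 2 / (2 * σ2) = -(ε ^ 2 / σ2) / 2 := by field_simp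
    rw [hr]; linarith
  have := Real.exp_le_exp.mpr hle
  nlinarith
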